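/- Let π = {π_1,…,π_k} be a set partition of [n], let u = (u_I)_{I⊆[n]} be real numbers, and for each i define v^{(i)} = (v^{(i)}_J)_{J⊆π_i} by v^{(i)}_J = Σ { u_I : I ⊆ [n] and I ∩ π_i = J }. Let Θ be a real symmetric n×n matrix that is block diagonal with respect to π and whose diagonal blocks Θ_{π_1},…,Θ_{π_k} are positive definite. Then L_u(Θ) = Σ_{i=1}^k L_{v^{(i)}}(Θ_{π_i}), where L_{v^{(i)}} denotes the log-likelihood function for the block Θ_{π_i} with index set π_i and data vector v^{(i)}. -/

import Mathlib

open Matrix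


private lemma det_eq_prod_fiber {ι κ : Type*} [Fintype ι] [DecidableEq ι] [Fintype κ]
    [DecidableEq κ] (M : Matrix ι ι ℝ) (c : ι → κ) (h : ∀ a b, c a ≠ c b → M a b = 0) :
    M.det = ∏ k : κ, (M.submatrix (fun x : {a // c a = k} => (x : ι))
      (fun x : {a // c a = k} => (x : ι))).det := by
  letI : LinearOrder κ := LinearOrder.lift' (Fintype.equivFin κ) (Fintype.equivFin κ).injective
  have ht : M.BlockTriangular c := fun i j hij => h i j hij.ne'
  exact ht.det_fintype

private lemma posDef_submatrix_inj {m l : Type*} [Fintype m] [Fintype l] [DecidableEq m]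
    [DecidableEq l] {M : Matrix m m ℝ} (hM : M.PosDef) {f : l → m}
    (hf : Function.Injective f) : (M.submatrix f f).PosDef := by
  have hsum : ∀ (v : m → ℝ), (∀ a, (¬ ∃ i, f i = a) → v a = 0) →
      ∑ a, v a = ∑ i, v (f i) := by
    intro v hv
    rw [← Finset.sum_image (fun i _ j _ h => hf h)]
    refine (Finset.sum_subset (Finset.subset_univ _) ?_).symm
    intro a _ ha
    exact hv a (by simpa [Finset.mem_image] using ha)
  refine Matrix.posDef_iff_dotProduct_mulVec.mpr ⟨hM.isHermitian.submatrix f, ?_⟩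
  intro x hx
  set y : m → ℝ := Function.extend f x 0 with hy
  have hyf : ∀ i, y (f i) = x i := fun i => hf.extend_apply x 0 i
  have hy0' : ∀ a, (¬ ∃ i, f i = a) → y a = 0 := fun a ha => by
    simpa [hy] using Function.extend_apply' x (0 : m → ℝ) a ha
  have hy0 : y ≠ 0 := by
    intro h
    apply hx
    funext i
    have := hyf i
    rw [h] at this
    exact this.symm
  have key : dotProduct (star x) ((M.submatrix f f) *ᵥ x) = dotProduct (star y) (M *ᵥ y) := by
    simp only [dotProduct, Matrix.mulVec, star_trivial]
    rw [hsum (fun a => y a * ∑ b, M a b * y b)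
      (fun a ha => by show y a * _ = 0; rw [hy0' a ha, zero_mul])]
    refine Finset.sum_congr rfl fun i _ => ?_
    rw [hyf i]
    congr 1
    rw [hsum (fun b => M (f i) b * y b)
      (fun b hb => by show M (f i) b * y b = 0; rw [hy0' b hb, mul_zero])]
    refine Finset.sum_congr rfl fun j _ => by rw [hyf j]; rfl
  rw [key]
  exact hM.dotProduct_mulVec_pos hy0



noncomputable section

/-- The principal minor of `Θ` indexed by the subset `I` (with `det(Θ_∅) = 1`). -/
def principalMinor {ι : Type*} [DecidableEq ι] (Θ : Matrix ι ι ℝ) (I : Finset ι) : ℝ :=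
  (Θ.submatrix (fun a : {x // x ∈ I} => (a : ι)) (fun a : {x // x ∈ I} => (a : ι))).det

/-- The log-likelihood function of the determinantal point process model:
`L_u(Θ) = Σ_I u_I · log det(Θ_I) − (Σ_I u_I) · log det(Θ + Id)`. -/
def logLik {ι : Type*} [Fintype ι] [DecidableEq ι]
    (u : Finset ι → ℝ) (Θ : Matrix ι ι ℝ) : ℝ :=
  (∑ I : Finset ι, u I * Real.log (principalMinor Θ I))
    - (∑ I : Finset ι, u I) * Real.log (Θ + 1).det

/-- The diagonal block `Θ_B` of `Θ` with rows and columns indexed by `B`. -/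
def blockSub {ι : Type*} (Θ : Matrix ι ι ℝ) (B : Finset ι) :
    Matrix {x // x ∈ B} {x // x ∈ B} ℝ :=
  Θ.submatrix (fun a => (a : ι)) (fun a => (a : ι))

/-- The restricted data vector `v` on subsets of the block `B`:
`v_J = Σ { u_I : I ⊆ [n], I ∩ B = J }`. -/
def restrictData {ι : Type*} [Fintype ι] [DecidableEq ι]
    (u : Finset ι → ℝ) (B : Finset ι) (J : Finset {x // x ∈ B}) : ℝ :=
  ∑ I ∈ Finset.univ.filter
      (fun I : Finset ι => I ∩ B = J.map (Function.Embedding.subtype (· ∈ B))), u I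

/-- For a symmetric matrix `Θ` that is block diagonal with respect to a set partition
`π` of `[n]`, with positive-definite diagonal blocks, the log-likelihood decomposes
additively: `L_u(Θ) = Σ_{B ∈ π} L_{v^{(B)}}(Θ_B)`. -/
theorem logLik_blockDiagonal_decomposition {n : ℕ}
    (π : Finset (Finset (Fin n)))
    (hne : ∀ B ∈ π, B.Nonempty)
    (hdisj : ∀ B ∈ π, ∀ B' ∈ π, B ≠ B' → Disjoint B B')
    (hcover : ∀ a : Fin n, ∃ B ∈ π, a ∈ B)
    (u : Finset (Fin n) → ℝ)
    (Θ : Matrix (Fin n) (Fin n) ℝ) (hsymm : Θ.IsSymm)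
    (hblock : ∀ B ∈ π, ∀ B' ∈ π, B ≠ B' → ∀ a ∈ B, ∀ b ∈ B', Θ a b = 0)
    (hpd : ∀ B ∈ π, (blockSub Θ B).PosDef) :
    logLik u Θ = ∑ B ∈ π, logLik (restrictData u B) (blockSub Θ B) := by
  classical
  have huniq : ∀ a : Fin n, ∃! B, B ∈ π ∧ a ∈ B := by
    intro a
    obtain ⟨B, hB, haB⟩ := hcover a
    refine ⟨B, ⟨hB, haB⟩, ?_⟩
    rintro B' ⟨hB', haB'⟩
    by_contra hne'
    exact Finset.disjoint_left.mp (hdisj B' hB' B hB hne') haB' haB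
  set c : Fin n → {B // B ∈ π} :=
    fun a => ⟨π.choose (a ∈ ·) (huniq a), Finset.choose_mem _ _ _⟩ with hcdef
  have hmem : ∀ a, a ∈ (c a).1 := fun a => Finset.choose_property (a ∈ ·) π (huniq a)
  have hceq : ∀ (a : Fin n) (B) (hB : B ∈ π), a ∈ B → c a = ⟨B, hB⟩ := fun a B hB haB =>
    Subtype.ext ((huniq a).unique ⟨(c a).2, hmem a⟩ ⟨hB, haB⟩)
  have hz : ∀ a b : Fin n, c a ≠ c b → Θ a b = 0 := fun a b hab =>
    hblock _ (c a).2 _ (c b).2 (fun h => hab (Subtype.ext h)) a (hmem a) b (hmem b)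
  -- Step A : determinant of Θ + 1 factors over blocks
  have hA : Real.log (Θ + 1).det = ∑ B ∈ π, Real.log (blockSub Θ B + 1).det := by
    have h0 : ∀ a b, c a ≠ c b → (Θ + 1) a b = 0 := by
      intro a b hab
      have hne' : a ≠ b := fun h => hab (by rw [h])
      simp [Matrix.add_apply, Matrix.one_apply_ne hne', hz a b hab]
    rw [det_eq_prod_fiber _ c h0]
    have hfac : ∀ k : {B // B ∈ π},
        ((Θ + 1).submatrix (fun x : {a // c a = k} => (x : Fin n))
          (fun x : {a // c a = k} => (x : Fin n))).det = (blockSub Θ k.1 + 1).det := by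
      intro k
      let e : {a // c a = k} ≃ {x // x ∈ k.1} :=
        { toFun := fun a => ⟨a.1, by have h := hmem a.1; rw [a.2] at h; exact h⟩
          invFun := fun x => ⟨x.1, by simpa using hceq x.1 k.1 k.2 x.2⟩
          left_inv := fun a => Subtype.ext rfl
          right_inv := fun x => Subtype.ext rfl }
      rw [← Matrix.det_submatrix_equiv_self e (blockSub Θ k.1 + 1)]
      congr 1
      ext a b
      have h1 : ((e a : {x // x ∈ k.1}) : Fin n) = a.1 := rfl
      have h2 : ((e b : {x // x ∈ k.1}) : Fin n) = b.1 := rfl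
      have h3 : (e a = e b) ↔ a = b := e.apply_eq_iff_eq
      simp only [Matrix.submatrix_apply, Matrix.add_apply, Matrix.one_apply, blockSub,
        h1, h2, h3, Subtype.ext_iff]
    simp only [hfac]
    rw [Finset.prod_coe_sort π (fun B => (blockSub Θ B + 1).det)]
    exact Real.log_prod
      (fun B hB => ((hpd B hB).add_posSemidef Matrix.PosSemidef.one).det_pos.ne')
  -- Step B : principal minors factor over blocks
  have hBlog : ∀ I : Finset (Fin n), Real.log (principalMinor Θ I)
      = ∑ B ∈ π, Real.log (principalMinor (blockSub Θ B) (Finset.subtype (· ∈ B) I)) := by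
    intro I
    have h0 : ∀ a b : {x // x ∈ I}, c a.1 ≠ c b.1 →
        (Θ.submatrix (fun a : {x // x ∈ I} => (a : Fin n))
          (fun a : {x // x ∈ I} => (a : Fin n))) a b = 0 :=
      fun a b hab => hz a.1 b.1 hab
    have hstep := det_eq_prod_fiber
      (Θ.submatrix (fun a : {x // x ∈ I} => (a : Fin n)) (fun a : {x // x ∈ I} => (a : Fin n)))
      (fun x : {x // x ∈ I} => c x.1) h0
    have hfac : ∀ k : {B // B ∈ π},
        ((Θ.submatrix (fun a : {x // x ∈ I} => (a : Fin n))
            (fun a : {x // x ∈ I} => (a : Fin n))).submatrix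
          (fun x : {a : {x // x ∈ I} // c a.1 = k} => (x : {x // x ∈ I}))
          (fun x : {a : {x // x ∈ I} // c a.1 = k} => (x : {x // x ∈ I}))).det
        = principalMinor (blockSub Θ k.1) (Finset.subtype (· ∈ k.1) I) := by
      intro k
      let e : {y : {x // x ∈ k.1} // y ∈ Finset.subtype (· ∈ k.1) I} ≃
          {a : {x // x ∈ I} // c a.1 = k} :=
        { toFun := fun y => ⟨⟨y.1.1, Finset.mem_subtype.mp y.2⟩,
            by simpa using hceq y.1.1 k.1 k.2 y.1.2⟩
          invFun := fun a => ⟨⟨a.1.1, by have := hmem a.1.1; rw [a.2] at this; exact this⟩,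
            Finset.mem_subtype.mpr a.1.2⟩
          left_inv := fun y => Subtype.ext (Subtype.ext rfl)
          right_inv := fun a => Subtype.ext (Subtype.ext rfl) }
      rw [← Matrix.det_submatrix_equiv_self e]
      rfl
    unfold principalMinor
    rw [hstep]
    simp only [hfac]
    rw [Finset.prod_coe_sort π
      (fun B => principalMinor (blockSub Θ B) (Finset.subtype (· ∈ B) I))]
    exact Real.log_prod (fun B hB =>
      (posDef_submatrix_inj (hpd B hB) Subtype.coe_injective).det_pos.ne')
  -- Step C : rewrite each block log-likelihood as a sum over all subsets of Fin n
  have hC : ∀ B ∈ π, logLik (restrictData u B) (blockSub Θ B)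
      = (∑ I : Finset (Fin n),
          u I * Real.log (principalMinor (blockSub Θ B) (Finset.subtype (· ∈ B) I)))
        - (∑ I : Finset (Fin n), u I) * Real.log (blockSub Θ B + 1).det := by
    intro B hB
    have hfilter : ∀ J : Finset {x // x ∈ B},
        Finset.univ.filter
          (fun I : Finset (Fin n) => I ∩ B = J.map (Function.Embedding.subtype (· ∈ B)))
        = Finset.univ.filter (fun I : Finset (Fin n) => Finset.subtype (· ∈ B) I = J) := by
      intro J
      ext I
      simp only [Finset.mem_filter, Finset.mem_univ, true_and]
      constructor
      · intro h
        apply Finset.map_injective (Function.Embedding.subtype (· ∈ B))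
        rw [Finset.subtype_map, Finset.filter_mem_eq_inter, h]
      · intro h
        rw [← h, Finset.subtype_map, Finset.filter_mem_eq_inter]
    simp only [logLik, restrictData, hfilter]
    congr 1
    · rw [← Finset.sum_fiberwise Finset.univ
        (fun I : Finset (Fin n) => Finset.subtype (· ∈ B) I)
        (fun I => u I * Real.log (principalMinor (blockSub Θ B) (Finset.subtype (· ∈ B) I)))]
      refine Finset.sum_congr rfl fun J _ => ?_
      rw [Finset.sum_mul]
      refine Finset.sum_congr rfl fun I hI => ?_
      rw [(Finset.mem_filter.mp hI).2]
    · congr 1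
      rw [← Finset.sum_fiberwise Finset.univ
        (fun I : Finset (Fin n) => Finset.subtype (· ∈ B) I) u]
  rw [Finset.sum_congr rfl hC]
  simp only [logLik]
  rw [hA, Finset.sum_sub_distrib]
  congr 1
  · calc (∑ I : Finset (Fin n), u I * Real.log (principalMinor Θ I))
        = ∑ I : Finset (Fin n), ∑ B ∈ π,
            u I * Real.log (principalMinor (blockSub Θ B) (Finset.subtype (· ∈ B) I)) := by
          refine Finset.sum_congr rfl fun I _ => ?_
          rw [hBlog I, Finset.mul_sum]
      _ = _ := Finset.sum_comm
  · rw [Finset.mul_sum]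

end
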